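/- Let X be a σ-finite measure space, r ≥ 1 an integer, S₁,...,S_r finite sets, and for each i ∈ {1,...,r} and q ∈ S_i let F^i_q ∈ L^{2r}(X; H) with H a separable Hilbert space. Suppose that for every sequence (q₁(0), q₁(1), ..., q_r(0), q_r(1)) ∈ S₁² × ⋯ × S_r² having the uniqueness property one has ∫_X Π_{i=1}^r ⟨F^i_{q_i(0)}(x), F^i_{q_i(1)}(x)⟩_H dμ(x) = 0. Then ∫_X Π_{i=1}^r ‖Σ_{q∈S_i} F^i_q(x)‖_H² dμ(x) ≤ C_r · ∫_X Π_{i=1}^r (Σ_{q∈S_i} ‖F^i_q(x)‖_H²) dμ(x), with C_r depending only on r. -/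

import Mathlib

open MeasureTheory Finset
open scoped ENNReal NNReal

private lemma enn_one_div_div (n k : ℕ) (hn : n ≠ 0) :
    1 / ((n : ℝ≥0∞) / (k : ℕ)) = (k : ℝ≥0∞) / (n : ℝ≥0∞) := by
  have hn0 : (n : ℝ≥0∞) ≠ 0 := Nat.cast_ne_zero.2 hn
  have hnt : (n : ℝ≥0∞) ≠ ⊤ := ENNReal.natCast_ne_top n
  rw [one_div, div_eq_mul_inv, ENNReal.mul_inv (Or.inl hn0) (Or.inl hnt), inv_inv,
    mul_comm, div_eq_mul_inv]

private lemma memLp_prod_aux {X : Type} [MeasurableSpace X] {μ : Measure X}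
    {P : Type} (n : ℕ) (hn : n ≠ 0) (h : P → X → ℝ)
    (hh : ∀ p, MemLp (h p) n μ) (s : Finset P) :
    MemLp (fun x => ∏ p ∈ s, h p x) ((n : ℝ≥0∞) / (s.card : ℕ)) μ := by
  classical
  induction s using Finset.cons_induction with
  | empty =>
      simp only [Finset.prod_empty, Finset.card_empty, Nat.cast_zero,
        ENNReal.div_zero (Nat.cast_ne_zero.2 hn)]
      exact memLp_top_const 1
  | cons a s ha ih =>
      have heq : (fun x => ∏ p ∈ Finset.cons a s ha, h p x)
          = (h a) • (fun x => ∏ p ∈ s, h p x) := by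
        funext x; simp [Finset.prod_cons, Finset.prod_insert ha, smul_eq_mul]
      rw [heq]
      haveI : ENNReal.HolderTriple (n : ℝ≥0∞) ((n : ℝ≥0∞) / (s.card : ℕ))
          ((n : ℝ≥0∞) / ((Finset.cons a s ha).card : ℕ)) := ⟨by
        simp only [← one_div]
        rw [Finset.card_cons, enn_one_div_div n (s.card + 1) hn, enn_one_div_div n s.card hn,
          ENNReal.div_add_div_same]
        push_cast
        rw [add_comm]⟩
      exact MemLp.smul ih (hh a)

private lemma sum_biUnion_le_nonneg {A B : Type} [DecidableEq A] [DecidableEq B]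
    (s : Finset A) (t : A → Finset B) (f : B → ℝ) (hf : ∀ b, 0 ≤ f b) :
    ∑ b ∈ s.biUnion t, f b ≤ ∑ a ∈ s, ∑ b ∈ t a, f b := by
  induction s using Finset.induction_on with
  | empty => simp
  | insert _ _ ha ih =>
      rename_i a s
      rw [Finset.biUnion_insert, Finset.sum_insert ha]
      have h1 : ∑ b ∈ t a ∪ s.biUnion t, f b + ∑ b ∈ (t a) ∩ (s.biUnion t), f b
          = ∑ b ∈ t a, f b + ∑ b ∈ s.biUnion t, f b := Finset.sum_union_inter
      have h2 : 0 ≤ ∑ b ∈ (t a) ∩ (s.biUnion t), f b :=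
        Finset.sum_nonneg fun b _ => hf b
      linarith

private lemma exists_idem' {P : Type} [Fintype P] [DecidableEq P] {ι : Type} [DecidableEq ι]
    (q : P → ι) (h : ∀ p, ∃ p', p' ≠ p ∧ q p' = q p) :
    ∃ g : P → P, (∀ p, q (g p) = q p) ∧ (∀ p, g (g p) = g p) ∧
      (∀ p, ∃ p', p' ≠ p ∧ g p' = g p) := by
  classical
  set e := Fintype.equivFin P with he
  have hne : ∀ p : P, ((Finset.univ.filter (fun p' => q p' = q p)).image e).Nonempty :=
    fun p => Finset.Nonempty.image ⟨p, by simp⟩ _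
  set g : P → P := fun p =>
    e.symm (((Finset.univ.filter (fun p' => q p' = q p)).image e).min' (hne p)) with hg
  have hmin : ∀ (s t : Finset (Fin (Fintype.card P))) (hs : s.Nonempty) (ht : t.Nonempty),
      s = t → s.min' hs = t.min' ht := by
    rintro s t hs ht rfl; rfl
  have hmem : ∀ p, g p ∈ Finset.univ.filter (fun p' => q p' = q p) := by
    intro p
    have h1 := Finset.min'_mem _ (hne p)
    rw [Finset.mem_image] at h1
    obtain ⟨p₀, hp₀, hp₀e⟩ := h1
    simp only [hg]
    rw [← hp₀e, Equiv.symm_apply_apply]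
    exact hp₀
  have hq : ∀ p, q (g p) = q p := fun p => (Finset.mem_filter.1 (hmem p)).2
  have hsame : ∀ p p', q p' = q p → g p' = g p := by
    intro p p' hqe
    have hset : Finset.univ.filter (fun p'' => q p'' = q p')
        = Finset.univ.filter (fun p'' => q p'' = q p) := by
      ext p''; simp [hqe]
    simp only [hg]
    congr 1
    exact hmin _ _ _ _ (by rw [hset])
  refine ⟨g, hq, fun p => hsame p (g p) (hq p), fun p => ?_⟩
  obtain ⟨p', hne', hqe⟩ := h p
  exact ⟨p', hne', hsame p p' hqe⟩

private lemma sum_compat_le {P ι : Type} [Fintype P] [DecidableEq P] [Nonempty P]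
    [DecidableEq ι] (T : Finset ι) (b : P → ι → ℝ) (hb : ∀ p v, 0 ≤ b p v)
    (g : P → P) (hg1 : ∀ p, g (g p) = g p) (hg2 : ∀ p, ∃ p', p' ≠ p ∧ g p' = g p) :
    ∑ q ∈ (Fintype.piFinset fun _ : P => T).filter (fun q => ∀ p, q (g p) = q p),
        ∏ p, b p (q p)
      ≤ ∏ p, Real.sqrt (∑ v ∈ T, (b p v) ^ 2) := by
  classical
  rcases T.eq_empty_or_nonempty with rfl | ⟨t₀, ht₀⟩
  · have hemp : (Fintype.piFinset fun _ : P => (∅ : Finset ι)) = ∅ := by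
      ext f
      constructor
      · intro h
        exact absurd (Fintype.mem_piFinset.1 h (Classical.arbitrary P))
          (Finset.notMem_empty _)
      · intro h; exact absurd h (Finset.notMem_empty f)
    rw [hemp]
    simp only [Finset.filter_empty, Finset.sum_empty]
    positivity
  · set B : P → ℝ := fun p => Real.sqrt (∑ v ∈ T, (b p v) ^ 2) with hB
    have hB0 : ∀ p, 0 ≤ B p := fun p => Real.sqrt_nonneg _
    have hbB : ∀ p v, v ∈ T → b p v ≤ B p := by
      intro p v hv
      rw [show b p v = Real.sqrt ((b p v) ^ 2) from (Real.sqrt_sq (hb p v)).symm]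
      exact Real.sqrt_le_sqrt (Finset.single_le_sum (f := fun v' => (b p v') ^ 2) (fun v' _ => sq_nonneg _) hv)
    set u : P → Finset ι := fun s => if g s = s then T else {t₀} with hu
    set e : (P → ι) → P → ι := fun q s => if g s = s then q s else t₀ with he
    set Qs : Finset (P → ι) :=
      (Fintype.piFinset fun _ : P => T).filter (fun q => ∀ p, q (g p) = q p) with hQs
    have hcompat : ∀ q ∈ Qs, ∀ p, q (g p) = q p := fun q hq => (Finset.mem_filter.1 hq).2
    have h1 : ∀ q ∈ Qs, ∏ p, b p (q p) = ∏ p, b p ((e q) (g p)) := by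
      intro q hq
      refine Finset.prod_congr rfl fun p _ => ?_
      have h2 : e q (g p) = q p := by
        simp only [he]
        rw [if_pos (hg1 p)]
        exact hcompat q hq p
      rw [h2]
    have hinj : ∀ q1 ∈ Qs, ∀ q2 ∈ Qs, e q1 = e q2 → q1 = q2 := by
      intro q1 h1' q2 h2' hee
      funext p
      have h3 : e q1 (g p) = e q2 (g p) := congrFun hee (g p)
      simp only [he] at h3
      rw [if_pos (hg1 p), if_pos (hg1 p)] at h3
      calc q1 p = q1 (g p) := (hcompat q1 h1' p).symm
        _ = q2 (g p) := h3
        _ = q2 p := hcompat q2 h2' p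
    have himgsub : Qs.image e ⊆ Fintype.piFinset u := by
      intro w hw
      rw [Finset.mem_image] at hw
      obtain ⟨q, hq, rfl⟩ := hw
      refine Fintype.mem_piFinset.2 fun s => ?_
      simp only [he, hu]
      by_cases hs : g s = s
      · rw [if_pos hs, if_pos hs]
        exact Fintype.mem_piFinset.1 (Finset.mem_filter.1 hq).1 s
      · rw [if_neg hs, if_neg hs]
        exact Finset.mem_singleton_self t₀
    have step1 : ∑ q ∈ Qs, ∏ p, b p (q p) ≤
        ∑ w ∈ Fintype.piFinset u, ∏ p, b p (w (g p)) :=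
      calc ∑ q ∈ Qs, ∏ p, b p (q p)
          = ∑ q ∈ Qs, ∏ p, b p ((e q) (g p)) := Finset.sum_congr rfl h1
        _ = ∑ w ∈ Qs.image e, ∏ p, b p (w (g p)) :=
            (Finset.sum_image (g := e) (f := fun w => ∏ p, b p (w (g p))) hinj).symm
        _ ≤ ∑ w ∈ Fintype.piFinset u, ∏ p, b p (w (g p)) :=
            Finset.sum_le_sum_of_subset_of_nonneg himgsub
              (fun w _ _ => Finset.prod_nonneg fun p _ => hb p (w (g p)))
    have step2 : ∑ w ∈ Fintype.piFinset u, ∏ p, b p (w (g p))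
        = ∏ s, ∑ v ∈ u s, ∏ p ∈ Finset.univ.filter (fun p => g p = s), b p v := by
      rw [Finset.prod_univ_sum]
      refine Finset.sum_congr rfl fun w _ => ?_
      rw [← Finset.prod_fiberwise_of_maps_to
        (fun p (_ : p ∈ Finset.univ) => Finset.mem_univ (g p))
        (fun p => b p (w (g p)))]
      refine Finset.prod_congr rfl fun s _ => Finset.prod_congr rfl fun p hp => ?_
      rw [(Finset.mem_filter.1 hp).2]
    have step3 : ∀ s : P,
        ∑ v ∈ u s, ∏ p ∈ Finset.univ.filter (fun p => g p = s), b p v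
          ≤ ∏ p ∈ Finset.univ.filter (fun p => g p = s), B p := by
      intro s
      by_cases hs : g s = s
      · obtain ⟨p', hp'ne, hp'⟩ := hg2 s
        have hp'fix : g p' = s := by rw [hp', hs]
        have hsmem : s ∈ Finset.univ.filter (fun p => g p = s) := by simp [hs]
        have hp'mem : p' ∈ (Finset.univ.filter (fun p => g p = s)).erase s :=
          Finset.mem_erase.2 ⟨hp'ne, by simp [hp'fix]⟩
        set rest := ((Finset.univ.filter (fun p => g p = s)).erase s).erase p' with hrest
        have hdecomp : ∀ f : P → ℝ,
            ∏ p ∈ Finset.univ.filter (fun p => g p = s), f p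
              = f s * (f p' * ∏ p ∈ rest, f p) := by
          intro f
          rw [← Finset.mul_prod_erase _ f hsmem, ← Finset.mul_prod_erase _ f hp'mem]
        have hus : u s = T := by simp only [hu]; rw [if_pos hs]
        rw [hus]
        calc ∑ v ∈ T, ∏ p ∈ Finset.univ.filter (fun p => g p = s), b p v
            = ∑ v ∈ T, b s v * (b p' v * ∏ p ∈ rest, b p v) :=
              Finset.sum_congr rfl fun v _ => hdecomp _
          _ ≤ ∑ v ∈ T, b s v * b p' v * ∏ p ∈ rest, B p := by
              refine Finset.sum_le_sum fun v hv => ?_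
              have hr1 : ∏ p ∈ rest, b p v ≤ ∏ p ∈ rest, B p :=
                Finset.prod_le_prod (fun p _ => hb p v) (fun p _ => hbB p v hv)
              calc b s v * (b p' v * ∏ p ∈ rest, b p v)
                  ≤ b s v * (b p' v * ∏ p ∈ rest, B p) :=
                    mul_le_mul_of_nonneg_left
                      (mul_le_mul_of_nonneg_left hr1 (hb p' v)) (hb s v)
                _ = b s v * b p' v * ∏ p ∈ rest, B p := (mul_assoc _ _ _).symm
          _ = (∑ v ∈ T, b s v * b p' v) * ∏ p ∈ rest, B p := (Finset.sum_mul _ _ _).symm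
          _ ≤ (B s * B p') * ∏ p ∈ rest, B p :=
              mul_le_mul_of_nonneg_right (Real.sum_mul_le_sqrt_mul_sqrt T (b s) (b p'))
                (Finset.prod_nonneg fun p _ => hB0 p)
          _ = ∏ p ∈ Finset.univ.filter (fun p => g p = s), B p := by
              rw [hdecomp B, mul_assoc]
      · have hfib_emp : Finset.univ.filter (fun p => g p = s) = ∅ := by
          ext p
          simp only [Finset.mem_filter, Finset.mem_univ, true_and, Finset.notMem_empty,
            iff_false]
          intro hp
          exact hs (by rw [← hp, hg1 p, hp])
        have hus : u s = {t₀} := by simp only [hu]; rw [if_neg hs]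
        rw [hus, hfib_emp]
        simp
    calc ∑ q ∈ Qs, ∏ p, b p (q p)
        ≤ ∑ w ∈ Fintype.piFinset u, ∏ p, b p (w (g p)) := step1
      _ = ∏ s, ∑ v ∈ u s, ∏ p ∈ Finset.univ.filter (fun p => g p = s), b p v := step2
      _ ≤ ∏ s, ∏ p ∈ Finset.univ.filter (fun p => g p = s), B p :=
          Finset.prod_le_prod
            (fun s _ => Finset.sum_nonneg fun v _ => Finset.prod_nonneg fun p _ => hb p v)
            (fun s _ => step3 s)
      _ = ∏ p, B p := Finset.prod_fiberwise_of_maps_to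
            (fun p (_ : p ∈ Finset.univ) => Finset.mem_univ (g p)) B

private lemma key_count {P ι : Type} [Fintype P] [DecidableEq P] [Nonempty P]
    [DecidableEq ι] (T : Finset ι) (b : P → ι → ℝ) (hb : ∀ p v, 0 ≤ b p v) :
    ∑ q ∈ (Fintype.piFinset fun _ : P => T).filter
        (fun q => ∀ p, ∃ p', p' ≠ p ∧ q p' = q p), ∏ p, b p (q p)
      ≤ (Fintype.card (P → P) : ℝ) * ∏ p, Real.sqrt (∑ v ∈ T, (b p v) ^ 2) := by
  classical
  set Gs : Finset (P → P) := Finset.univ.filter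
    (fun g => (∀ p, g (g p) = g p) ∧ (∀ p, ∃ p', p' ≠ p ∧ g p' = g p)) with hGs
  have hsub : (Fintype.piFinset fun _ : P => T).filter
        (fun q => ∀ p, ∃ p', p' ≠ p ∧ q p' = q p)
      ⊆ Gs.biUnion (fun g => (Fintype.piFinset fun _ : P => T).filter
          (fun q => ∀ p, q (g p) = q p)) := by
    intro q hq
    obtain ⟨hq1, hq2⟩ := Finset.mem_filter.1 hq
    obtain ⟨g, hg1, hg2, hg3⟩ := exists_idem' q hq2
    exact Finset.mem_biUnion.2 ⟨g, Finset.mem_filter.2 ⟨Finset.mem_univ _, hg2, hg3⟩,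
      Finset.mem_filter.2 ⟨hq1, hg1⟩⟩
  calc ∑ q ∈ (Fintype.piFinset fun _ : P => T).filter
        (fun q => ∀ p, ∃ p', p' ≠ p ∧ q p' = q p), ∏ p, b p (q p)
      ≤ ∑ q ∈ Gs.biUnion (fun g => (Fintype.piFinset fun _ : P => T).filter
          (fun q => ∀ p, q (g p) = q p)), ∏ p, b p (q p) :=
        Finset.sum_le_sum_of_subset_of_nonneg hsub
          (fun q _ _ => Finset.prod_nonneg fun p _ => hb p (q p))
    _ ≤ ∑ g ∈ Gs, ∑ q ∈ (Fintype.piFinset fun _ : P => T).filter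
          (fun q => ∀ p, q (g p) = q p), ∏ p, b p (q p) :=
        sum_biUnion_le_nonneg _ _ _ (fun q => Finset.prod_nonneg fun p _ => hb p (q p))
    _ ≤ ∑ _g ∈ Gs, ∏ p, Real.sqrt (∑ v ∈ T, (b p v) ^ 2) :=
        Finset.sum_le_sum fun g hg => sum_compat_le T b hb g
          ((Finset.mem_filter.1 hg).2.1) ((Finset.mem_filter.1 hg).2.2)
    _ = Gs.card * ∏ p, Real.sqrt (∑ v ∈ T, (b p v) ^ 2) := by
        rw [Finset.sum_const, nsmul_eq_mul]
    _ ≤ (Fintype.card (P → P) : ℝ) * ∏ p, Real.sqrt (∑ v ∈ T, (b p v) ^ 2) := by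
        refine mul_le_mul_of_nonneg_right ?_
          (Finset.prod_nonneg fun p _ => Real.sqrt_nonneg _)
        exact_mod_cast Finset.card_le_univ Gs

set_option maxHeartbeats 2000000

/-- Orthogonality lemma: if for every sequence `(q_i(0), q_i(1))_{i < r}` with entries
`q_i(l) ∈ S_i` having the uniqueness property (some value occurs exactly once) the
integral of the product of inner products vanishes, then the integral of the product
of squared norms of the sums is controlled by the integral of the product of the sums
of squared norms, with a constant depending only on `r`. -/
theorem up_orthogonality_estimate (r : ℕ) (hr : 1 ≤ r) :
    ∃ C : ℝ, 0 < C ∧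
      ∀ (X : Type) (_ : MeasurableSpace X) (μ : Measure X) (_ : SigmaFinite μ)
        (H : Type) (_ : NormedAddCommGroup H) (_ : InnerProductSpace ℝ H)
        (_ : CompleteSpace H) (_ : TopologicalSpace.SeparableSpace H)
        (ι : Type) (_ : DecidableEq ι)
        (S : Fin r → Finset ι) (F : Fin r → ι → X → H),
        (∀ i q, q ∈ S i → MemLp (F i q) (2 * r) μ) →
        (∀ q : Fin r → Fin 2 → ι, (∀ i l, q i l ∈ S i) →
          (∃ i₀ l₀, ∀ i l, (i, l) ≠ (i₀, l₀) → q i l ≠ q i₀ l₀) →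
          ∫ x, ∏ i, (inner ℝ (F i (q i 0) x) (F i (q i 1) x) : ℝ) ∂μ = 0) →
        ∫ x, ∏ i, ‖∑ q ∈ S i, F i q x‖ ^ 2 ∂μ ≤
          C * ∫ x, ∏ i, ∑ q ∈ S i, ‖F i q x‖ ^ 2 ∂μ := by
  classical
  haveI hPne : Nonempty (Fin r × Fin 2) := ⟨(⟨0, hr⟩, 0)⟩
  refine ⟨(Fintype.card ((Fin r × Fin 2) → (Fin r × Fin 2)) : ℝ), ?_, ?_⟩
  · exact_mod_cast Fintype.card_pos_iff.2 ⟨id⟩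
  intro X mX μ _sf H _ng _ip _cs _sep ι _de S F hLp horth
  set n : ℕ := 2 * r with hn_def
  have hn0 : n ≠ 0 := by omega
  have hcast : ((n : ℕ) : ℝ≥0∞) = 2 * (r : ℝ≥0∞) := by
    rw [hn_def]; push_cast; ring
  have hcardP : Fintype.card (Fin r × Fin 2) = n := by
    simp only [Fintype.card_prod, Fintype.card_fin, hn_def]; ring
  have hLp' : ∀ (G : (Fin r × Fin 2) → ι), (∀ p, G p ∈ S p.1) →
      Integrable (fun x => ∏ p : Fin r × Fin 2, ‖F p.1 (G p) x‖) μ := by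
    intro G hG
    have h1 : ∀ p : Fin r × Fin 2, MemLp (fun x => ‖F p.1 (G p) x‖) ((n : ℕ) : ℝ≥0∞) μ := by
      intro p
      rw [hcast]
      exact (hLp p.1 (G p) (hG p)).norm
    have h2 := memLp_prod_aux n hn0 _ h1 Finset.univ
    rw [Finset.card_univ, hcardP,
      ENNReal.div_self (Nat.cast_ne_zero.2 hn0) (ENNReal.natCast_ne_top n)] at h2
    exact memLp_one_iff_integrable.1 h2
  set PI : Finset (Fin r → ι × ι) := Fintype.piFinset (fun i => (S i) ×ˢ (S i)) with hPIdef
  set aa : (Fin r → ι × ι) → (Fin r × Fin 2) → ι :=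
    fun σ p => if p.2 = 0 then (σ p.1).1 else (σ p.1).2 with haa
  have haa0 : ∀ σ i, aa σ (i, 0) = (σ i).1 := fun σ i => by simp [haa]
  have haa1 : ∀ σ i, aa σ (i, 1) = (σ i).2 := fun σ i => by simp [haa]
  have haa_mem : ∀ σ ∈ PI, ∀ p : Fin r × Fin 2, aa σ p ∈ S p.1 := by
    intro σ hσ p
    have h := Finset.mem_product.1 (Fintype.mem_piFinset.1 hσ p.1)
    by_cases h2 : p.2 = 0
    · simp only [haa]; rw [if_pos h2]; exact h.1
    · simp only [haa]; rw [if_neg h2]; exact h.2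
  set t : (Fin r → ι × ι) → X → ℝ :=
    fun σ x => ∏ i, (inner ℝ (F i (σ i).1 x) (F i (σ i).2 x) : ℝ) with ht
  have hbound : ∀ σ, ∀ x, |t σ x| ≤ ∏ p : Fin r × Fin 2, ‖F p.1 (aa σ p) x‖ := by
    intro σ x
    simp only [ht]
    rw [Finset.abs_prod]
    calc ∏ i, |(inner ℝ (F i (σ i).1 x) (F i (σ i).2 x) : ℝ)|
        ≤ ∏ i, ‖F i (σ i).1 x‖ * ‖F i (σ i).2 x‖ :=
          Finset.prod_le_prod (fun i _ => abs_nonneg _)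
            (fun i _ => abs_real_inner_le_norm _ _)
      _ = ∏ p : Fin r × Fin 2, ‖F p.1 (aa σ p) x‖ := by
          rw [Fintype.prod_prod_type]
          refine Finset.prod_congr rfl fun i _ => ?_
          rw [Fin.prod_univ_two, haa0, haa1]
  have hint : ∀ σ ∈ PI, Integrable (t σ) μ := by
    intro σ hσ
    refine Integrable.mono' (hLp' (aa σ) (haa_mem σ hσ)) ?_
      (Filter.Eventually.of_forall fun x => ?_)
    · refine Finset.aestronglyMeasurable_fun_prod _ fun i _ => ?_
      have h1 := Finset.mem_product.1 (Fintype.mem_piFinset.1 hσ i)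
      exact AEStronglyMeasurable.inner
        ((hLp i _ h1.1).aestronglyMeasurable) ((hLp i _ h1.2).aestronglyMeasurable)
    · rw [Real.norm_eq_abs]
      exact hbound σ x
  have hLHS : ∫ x, ∏ i, ‖∑ q ∈ S i, F i q x‖ ^ 2 ∂μ = ∑ σ ∈ PI, ∫ x, t σ x ∂μ := by
    rw [← integral_finset_sum PI hint]
    refine integral_congr_ae (Filter.Eventually.of_forall fun x => ?_)
    calc ∏ i, ‖∑ q ∈ S i, F i q x‖ ^ 2
        = ∏ i, ∑ ab ∈ (S i) ×ˢ (S i), (inner ℝ (F i ab.1 x) (F i ab.2 x) : ℝ) := by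
          refine Finset.prod_congr rfl fun i _ => ?_
          rw [← real_inner_self_eq_norm_sq, sum_inner, Finset.sum_product]
          simp only [inner_sum]
      _ = ∑ σ ∈ PI, t σ x := Finset.prod_univ_sum _ _
  set UP : (Fin r → ι × ι) → Prop :=
    fun σ => ∃ p₀ : Fin r × Fin 2, ∀ p, p ≠ p₀ → aa σ p ≠ aa σ p₀ with hUPdef
  have hUP0 : ∀ σ ∈ PI, UP σ → ∫ x, t σ x ∂μ = 0 := by
    intro σ hσ hup
    obtain ⟨p₀, hp₀⟩ := hup
    have h0 := horth (fun i l => aa σ (i, l)) (fun i l => haa_mem σ hσ (i, l))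
      ⟨p₀.1, p₀.2, fun i l hne => hp₀ (i, l) (by rwa [Prod.mk.eta] at hne)⟩
    simp only [haa0, haa1] at h0
    exact h0
  set NU : Finset (Fin r → ι × ι) := PI.filter (fun σ => ¬ UP σ) with hNUdef
  have hsplit : ∑ σ ∈ PI, ∫ x, t σ x ∂μ = ∑ σ ∈ NU, ∫ x, t σ x ∂μ := by
    rw [← Finset.sum_filter_add_sum_filter_not PI UP (fun σ => ∫ x, t σ x ∂μ)]
    rw [Finset.sum_eq_zero (fun σ hσ => hUP0 σ (Finset.mem_filter.1 hσ).1
      (Finset.mem_filter.1 hσ).2), zero_add]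
  have haainj : Function.Injective aa := by
    intro σ σ' hee
    funext i
    have h0 := congrFun hee (i, (0 : Fin 2))
    have h1 := congrFun hee (i, (1 : Fin 2))
    rw [haa0, haa0] at h0
    rw [haa1, haa1] at h1
    exact Prod.ext h0 h1
  have hkeyx : ∀ x, ∑ σ ∈ NU, ∏ p : Fin r × Fin 2, ‖F p.1 (aa σ p) x‖
      ≤ (Fintype.card ((Fin r × Fin 2) → (Fin r × Fin 2)) : ℝ) *
        ∏ i, ∑ v ∈ S i, ‖F i v x‖ ^ 2 := by
    intro x
    set T : Finset ι := Finset.univ.biUnion S with hT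
    set b : (Fin r × Fin 2) → ι → ℝ :=
      fun p v => if v ∈ S p.1 then ‖F p.1 v x‖ else 0 with hbdef
    have hb : ∀ p v, 0 ≤ b p v := by
      intro p v
      simp only [hbdef]
      split_ifs
      · exact norm_nonneg _
      · exact le_refl 0
    have hM : ∀ p : Fin r × Fin 2, ∑ v ∈ T, (b p v) ^ 2 = ∑ v ∈ S p.1, ‖F p.1 v x‖ ^ 2 := by
      intro p
      calc ∑ v ∈ T, (b p v) ^ 2
          = ∑ v ∈ T, (if v ∈ S p.1 then ‖F p.1 v x‖ ^ 2 else 0) := by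
            refine Finset.sum_congr rfl fun v _ => ?_
            simp only [hbdef]
            split_ifs
            · rfl
            · simp
        _ = ∑ v ∈ T.filter (fun v => v ∈ S p.1), ‖F p.1 v x‖ ^ 2 :=
            (Finset.sum_filter _ _).symm
        _ = ∑ v ∈ S p.1, ‖F p.1 v x‖ ^ 2 := by
            congr 1
            refine Finset.ext fun v => ⟨fun h => (Finset.mem_filter.1 h).2, fun h =>
              Finset.mem_filter.2 ⟨Finset.mem_biUnion.2 ⟨p.1, Finset.mem_univ _, h⟩, h⟩⟩
    calc ∑ σ ∈ NU, ∏ p : Fin r × Fin 2, ‖F p.1 (aa σ p) x‖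
        = ∑ σ ∈ NU, ∏ p : Fin r × Fin 2, b p (aa σ p) := by
          refine Finset.sum_congr rfl fun σ hσ => Finset.prod_congr rfl fun p _ => ?_
          simp only [hbdef]
          rw [if_pos (haa_mem σ (Finset.mem_filter.1 hσ).1 p)]
      _ = ∑ q ∈ NU.image aa, ∏ p, b p (q p) :=
          (Finset.sum_image (g := aa) (f := fun q => ∏ p, b p (q p)) (fun σ1 _ σ2 _ h => haainj h)).symm
      _ ≤ ∑ q ∈ (Fintype.piFinset fun _ : Fin r × Fin 2 => T).filter
            (fun q => ∀ p, ∃ p', p' ≠ p ∧ q p' = q p), ∏ p, b p (q p) := by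
          refine Finset.sum_le_sum_of_subset_of_nonneg ?_
            (fun q _ _ => Finset.prod_nonneg fun p _ => hb p (q p))
          intro q hq
          rw [Finset.mem_image] at hq
          obtain ⟨σ, hσ, rfl⟩ := hq
          obtain ⟨hσPI, hσnup⟩ := Finset.mem_filter.1 hσ
          refine Finset.mem_filter.2 ⟨?_, ?_⟩
          · exact Fintype.mem_piFinset.2 fun p => Finset.mem_biUnion.2
              ⟨p.1, Finset.mem_univ _, haa_mem σ hσPI p⟩
          · intro p
            simp only [hUPdef] at hσnup
            push_neg at hσnup
            obtain ⟨p', hp1, hp2⟩ := hσnup p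
            exact ⟨p', hp1, hp2⟩
      _ ≤ (Fintype.card ((Fin r × Fin 2) → (Fin r × Fin 2)) : ℝ) *
            ∏ p : Fin r × Fin 2, Real.sqrt (∑ v ∈ T, (b p v) ^ 2) := key_count T b hb
      _ = (Fintype.card ((Fin r × Fin 2) → (Fin r × Fin 2)) : ℝ) *
            ∏ i, ∑ v ∈ S i, ‖F i v x‖ ^ 2 := by
          congr 1
          rw [Fintype.prod_prod_type]
          refine Finset.prod_congr rfl fun i _ => ?_
          rw [Fin.prod_univ_two]
          simp only [hM]
          exact Real.mul_self_sqrt (Finset.sum_nonneg fun v _ => sq_nonneg _)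
  have hNUint : ∀ σ ∈ NU, Integrable (fun x => ∏ p : Fin r × Fin 2, ‖F p.1 (aa σ p) x‖) μ :=
    fun σ hσ => hLp' (aa σ) (haa_mem σ (Finset.mem_filter.1 hσ).1)
  have hRHSint : Integrable (fun x => ∏ i, ∑ v ∈ S i, ‖F i v x‖ ^ 2) μ := by
    have heq : (fun x => ∏ i, ∑ v ∈ S i, ‖F i v x‖ ^ 2)
        = fun x => ∑ τ ∈ Fintype.piFinset S, ∏ p : Fin r × Fin 2, ‖F p.1 (τ p.1) x‖ := by
      funext x
      rw [Finset.prod_univ_sum]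
      refine Finset.sum_congr rfl fun τ _ => ?_
      rw [Fintype.prod_prod_type]
      refine Finset.prod_congr rfl fun i _ => ?_
      rw [Fin.prod_univ_two, sq]
    rw [heq]
    exact integrable_finset_sum _ (fun τ hτ =>
      hLp' (fun p => τ p.1) (fun p => Fintype.mem_piFinset.1 hτ p.1))
  have hsumint : Integrable
      (fun x => ∑ σ ∈ NU, ∏ p : Fin r × Fin 2, ‖F p.1 (aa σ p) x‖) μ :=
    integrable_finset_sum _ hNUint
  calc ∫ x, ∏ i, ‖∑ q ∈ S i, F i q x‖ ^ 2 ∂μ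
      = ∑ σ ∈ PI, ∫ x, t σ x ∂μ := hLHS
    _ = ∑ σ ∈ NU, ∫ x, t σ x ∂μ := hsplit
    _ ≤ ∑ σ ∈ NU, ∫ x, ∏ p : Fin r × Fin 2, ‖F p.1 (aa σ p) x‖ ∂μ :=
        Finset.sum_le_sum fun σ hσ =>
          integral_mono (hint σ (Finset.mem_filter.1 hσ).1) (hNUint σ hσ)
            (fun x => (le_abs_self _).trans (hbound σ x))
    _ = ∫ x, ∑ σ ∈ NU, ∏ p : Fin r × Fin 2, ‖F p.1 (aa σ p) x‖ ∂μ :=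
        (integral_finset_sum NU hNUint).symm
    _ ≤ ∫ x, (Fintype.card ((Fin r × Fin 2) → (Fin r × Fin 2)) : ℝ) *
          ∏ i, ∑ v ∈ S i, ‖F i v x‖ ^ 2 ∂μ :=
        integral_mono hsumint (hRHSint.const_mul _) hkeyx
    _ = (Fintype.card ((Fin r × Fin 2) → (Fin r × Fin 2)) : ℝ) *
          ∫ x, ∏ i, ∑ v ∈ S i, ‖F i v x‖ ^ 2 ∂μ := integral_const_mul _ _
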